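/- arXiv:2504.08988 — 2 statements merged into one kernel-verified Lean document; each statement's English description precedes it below -/
import Mathlib

section
/- Let f(θ) = Σ_{k=0}^{q} a_k·cos(kθ) with real coefficients a_0, …, a_q, and let m ∈ ℕ, m ≥ 1. Then Σ_{k=1}^{q} k^{m−1}·|a_k| ≤ 4·sup_{θ∈[0,2π]} |f^{(m)}(θ)|. -/
/-!
STATEMENT 11 (trigonometric polynomial coefficient bound).
If `f(θ) = Σ_{k=0}^{q} a_k cos(kθ)` and `m ≥ 1`, then
`Σ_{k=1}^{q} k^{m−1} |a_k| ≤ 4 · sup_{θ ∈ [0,2π]} |f^{(m)}(θ)|`.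
-/

open Real intervalIntegral



lemma iter_deriv_trig (q : ℕ) (a : ℕ → ℝ) (m : ℕ) :
    iteratedDeriv m (fun t => ∑ k ∈ Finset.range (q + 1), a k * Real.cos (k * t)) =
      fun θ => ∑ k ∈ Finset.range (q + 1),
        a k * (k : ℝ) ^ m * Real.cos (k * θ + m * (π / 2)) := by
  induction m with
  | zero => simp [iteratedDeriv_zero]
  | succ n ih =>
    rw [iteratedDeriv_succ, ih]
    funext θ
    have h : ∀ k ∈ Finset.range (q + 1), HasDerivAt
        (fun t => a k * (k : ℝ) ^ n * Real.cos (k * t + n * (π / 2)))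
        (a k * (k : ℝ) ^ (n + 1) * Real.cos (k * θ + (n + 1) * (π / 2))) θ := by
      intro k _
      have h1 : HasDerivAt (fun t : ℝ => (k : ℝ) * t + n * (π / 2)) (k : ℝ) θ := by
        simpa using ((hasDerivAt_id θ).const_mul (k : ℝ)).add_const ((n : ℝ) * (π / 2))
      have h2 := (Real.hasDerivAt_cos ((k : ℝ) * θ + n * (π / 2))).comp θ h1
      have h3 := h2.const_mul (a k * (k : ℝ) ^ n)
      refine h3.congr_deriv ?_
      have : ((n : ℝ) + 1) * (π / 2) = n * (π / 2) + π / 2 := by ring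

      rw [this, ← add_assoc, Real.cos_add_pi_div_two]
      ring
    have := HasDerivAt.fun_sum h
    rw [this.deriv]
    simp only [Nat.cast_add, Nat.cast_one]


lemma integral_cos_int (n : ℤ) (hn : n ≠ 0) (d : ℝ) :
    ∫ θ in (0:ℝ)..(2 * π), Real.cos (n * θ + d) = 0 := by
  have hd : ∀ θ ∈ Set.uIcc (0:ℝ) (2 * π), HasDerivAt
      (fun t => Real.sin ((n:ℝ) * t + d) / n) (Real.cos ((n:ℝ) * θ + d)) θ := by
    intro θ _
    have h1 : HasDerivAt (fun t : ℝ => (n : ℝ) * t + d) (n : ℝ) θ := by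
      simpa using ((hasDerivAt_id θ).const_mul (n : ℝ)).add_const d
    have h2 := (Real.hasDerivAt_sin ((n : ℝ) * θ + d)).comp θ h1
    have h3 := h2.div_const (n : ℝ)
    refine h3.congr_deriv ?_
    field_simp [show (n:ℝ) ≠ 0 by exact_mod_cast hn]
  rw [integral_eq_sub_of_hasDerivAt hd (by apply Continuous.intervalIntegrable; continuity)]
  have : (n:ℝ) * (2 * π) + d = d + n * (2 * π) := by ring
  rw [this, Real.sin_add_int_mul_two_pi]
  simp

lemma integral_cos_mul_cos' (j k : ℕ) (hj : j ≠ 0) (hk : k ≠ 0) (c : ℝ) :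
    ∫ θ in (0:ℝ)..(2 * π), Real.cos (j * θ + c) * Real.cos (k * θ + c) =
      if j = k then π else 0 := by
  have key : ∀ θ : ℝ, Real.cos (j * θ + c) * Real.cos (k * θ + c) =
      (Real.cos (((j:ℝ) - k) * θ) + Real.cos (((j:ℝ) + k) * θ + (c + c))) / 2 := by
    intro θ
    rw [show ((j:ℝ) - k) * θ = ((j:ℝ) * θ + c) - ((k:ℝ) * θ + c) by ring,
      show ((j:ℝ) + k) * θ + (c + c) = ((j:ℝ) * θ + c) + ((k:ℝ) * θ + c) by ring]
    simp only [Real.cos_sub, Real.cos_add, Real.sin_add]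
    ring
  simp only [key]
  rw [intervalIntegral.integral_div]
  have h2 : ∫ θ in (0:ℝ)..(2 * π), Real.cos (((j:ℝ) + k) * θ + (c + c)) = 0 := by
    have := integral_cos_int ((j:ℤ) + k) (by omega) (c + c)
    push_cast at this
    exact this
  rw [intervalIntegral.integral_add (by apply Continuous.intervalIntegrable; continuity)
    (by apply Continuous.intervalIntegrable; continuity), h2]
  by_cases hjk : j = k
  · subst hjk
    simp [mul_comm]
  · have h1 : ∫ θ in (0:ℝ)..(2 * π), Real.cos (((j:ℝ) - k) * θ) = 0 := by
      have := integral_cos_int ((j:ℤ) - k) (by omega) 0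
      push_cast at this
      simpa using this
    simp [h1, hjk]


lemma parseval_aux (q : ℕ) (b : ℕ → ℝ) (hb0 : b 0 = 0) (c : ℝ) :
    ∫ θ in (0:ℝ)..(2 * π), (∑ k ∈ Finset.range (q + 1), b k * Real.cos (k * θ + c)) ^ 2
      = π * ∑ k ∈ Finset.range (q + 1), b k ^ 2 := by
  have expand : ∀ θ : ℝ, (∑ k ∈ Finset.range (q + 1), b k * Real.cos (k * θ + c)) ^ 2
      = ∑ j ∈ Finset.range (q + 1), ∑ k ∈ Finset.range (q + 1),
        (b j * b k) * (Real.cos (j * θ + c) * Real.cos (k * θ + c)) := by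
    intro θ
    rw [sq, Finset.sum_mul_sum]
    exact Finset.sum_congr rfl fun j _ => Finset.sum_congr rfl fun k _ => by ring
  simp only [expand]
  have hcont2 : ∀ j : ℕ, Continuous (fun θ : ℝ => ∑ k ∈ Finset.range (q + 1),
      (b j * b k) * (Real.cos (j * θ + c) * Real.cos (k * θ + c))) :=
    fun j => continuous_finset_sum _ fun k _ => by fun_prop
  rw [intervalIntegral.integral_finset_sum (fun j _ => ((hcont2 j).intervalIntegrable _ _))]
  have step : ∀ j ∈ Finset.range (q + 1),
      (∫ θ in (0:ℝ)..(2 * π), ∑ k ∈ Finset.range (q + 1),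
        (b j * b k) * (Real.cos (j * θ + c) * Real.cos (k * θ + c))) = π * b j ^ 2 := by
    intro j hj
    rw [intervalIntegral.integral_finset_sum
      (fun k _ => by apply Continuous.intervalIntegrable; fun_prop)]
    by_cases hj0 : j = 0
    · subst hj0; simp [hb0]
    · have h0 : ∀ k ∈ Finset.range (q + 1), k ≠ j →
          (∫ θ in (0:ℝ)..(2 * π), (b j * b k) * (Real.cos (j * θ + c) * Real.cos (k * θ + c))) = 0 := by
        intro k _ hkj
        by_cases hk0 : k = 0
        · simp [hk0, hb0]
        · rw [intervalIntegral.integral_const_mul, integral_cos_mul_cos' j k hj0 hk0 c,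
            if_neg (fun h => hkj h.symm)]
          simp
      rw [Finset.sum_eq_single j h0 (fun hnj => absurd hj hnj),
        intervalIntegral.integral_const_mul, integral_cos_mul_cos' j j hj0 hj0 c, if_pos rfl]
      ring
  rw [Finset.sum_congr rfl step, ← Finset.mul_sum]

lemma coeff_sq_bound (q : ℕ) (b : ℕ → ℝ) (c : ℝ) (hb0 : b 0 = 0) (M : ℝ)
    (hM : ∀ θ ∈ Set.Icc (0:ℝ) (2 * π),
      |∑ k ∈ Finset.range (q + 1), b k * Real.cos (k * θ + c)| ≤ M) :
    ∑ k ∈ Finset.range (q + 1), b k ^ 2 ≤ 2 * M ^ 2 := by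
  have hπ := Real.two_pi_pos
  have hcont : Continuous (fun θ : ℝ => ∑ k ∈ Finset.range (q + 1), b k * Real.cos (k * θ + c)) :=
    continuous_finset_sum _ fun k _ => by fun_prop
  have hle : (∫ θ in (0:ℝ)..(2 * π),
      (∑ k ∈ Finset.range (q + 1), b k * Real.cos (k * θ + c)) ^ 2)
      ≤ ∫ _ in (0:ℝ)..(2 * π), M ^ 2 := by
    apply intervalIntegral.integral_mono_on hπ.le
      ((hcont.pow 2).intervalIntegrable _ _) intervalIntegrable_const
    intro θ hθ
    have h := hM θ hθ
    simp only [Pi.pow_apply]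
    nlinarith [abs_nonneg (∑ k ∈ Finset.range (q + 1), b k * Real.cos (k * θ + c)),
      sq_abs (∑ k ∈ Finset.range (q + 1), b k * Real.cos (k * θ + c))]
  rw [parseval_aux q b hb0 c, intervalIntegral.integral_const, smul_eq_mul] at hle
  have hπ' := Real.pi_pos
  nlinarith [hle]

lemma sum_inv_sq_le_two (q : ℕ) : ∑ k ∈ Finset.Icc 1 q, (1 / (k : ℝ)) ^ 2 ≤ 2 := by
  rcases Nat.eq_zero_or_pos q with h | h
  · simp [h]
  · rw [(Finset.Ioc_insert_left h).symm, Finset.sum_insert (by simp)]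
    have h2 := sum_Ioc_inv_sq_le_sub (α := ℝ) (k := 1) (n := q) one_ne_zero h
    have heq : ∑ k ∈ Finset.Ioc 1 q, (1 / (k : ℝ)) ^ 2
        = ∑ i ∈ Finset.Ioc 1 q, ((i : ℝ) ^ 2)⁻¹ :=
      Finset.sum_congr rfl fun k _ => by rw [one_div, inv_pow]
    have hq : 0 ≤ (q : ℝ)⁻¹ := by positivity
    rw [heq]
    norm_num at h2 ⊢
    linarith

theorem trig_poly_coeff_bound (q : ℕ) (a : ℕ → ℝ) (m : ℕ) (hm : 1 ≤ m) :
    ∑ k ∈ Finset.Icc 1 q, (k : ℝ) ^ (m - 1) * |a k| ≤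
      4 * sSup ((fun θ =>
          |iteratedDeriv m (fun t => ∑ k ∈ Finset.range (q + 1), a k * Real.cos (k * t)) θ|) ''
        Set.Icc (0 : ℝ) (2 * Real.pi)) := by
  have hπ := Real.two_pi_pos
  have hfn : (fun θ => |iteratedDeriv m
        (fun t => ∑ k ∈ Finset.range (q + 1), a k * Real.cos (k * t)) θ|)
      = fun θ => |∑ k ∈ Finset.range (q + 1),
          a k * (k : ℝ) ^ m * Real.cos (k * θ + m * (π / 2))| := by
    funext θ; rw [iter_deriv_trig]
  rw [hfn]
  set M := sSup ((fun θ => |∑ k ∈ Finset.range (q + 1),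
      a k * (k : ℝ) ^ m * Real.cos (k * θ + m * (π / 2))|) '' Set.Icc (0 : ℝ) (2 * π)) with hMdef
  have hcont : Continuous (fun θ : ℝ => ∑ k ∈ Finset.range (q + 1),
      a k * (k : ℝ) ^ m * Real.cos (k * θ + m * (π / 2))) :=
    continuous_finset_sum _ fun k _ => by fun_prop
  have hbdd : BddAbove ((fun θ => |∑ k ∈ Finset.range (q + 1),
      a k * (k : ℝ) ^ m * Real.cos (k * θ + m * (π / 2))|) '' Set.Icc (0 : ℝ) (2 * π)) :=
    isCompact_Icc.bddAbove_image (hcont.abs.continuousOn)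
  have hM : ∀ θ ∈ Set.Icc (0:ℝ) (2 * π), |∑ k ∈ Finset.range (q + 1),
      a k * (k : ℝ) ^ m * Real.cos (k * θ + m * (π / 2))| ≤ M :=
    fun θ hθ => le_csSup hbdd ⟨θ, hθ, rfl⟩
  have hM0 : 0 ≤ M := le_trans (abs_nonneg _) (hM 0 ⟨le_rfl, hπ.le⟩)
  have hb0 : (fun k : ℕ => a k * (k : ℝ) ^ m) 0 = 0 := by
    simp [zero_pow (show m ≠ 0 by omega)]
  have hsq := coeff_sq_bound q (fun k => a k * (k : ℝ) ^ m) ((m : ℝ) * (π / 2)) hb0 M hM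
  -- transfer sum of squares to Icc 1 q
  have hsub : Finset.Icc 1 q ⊆ Finset.range (q + 1) := by
    intro x hx; simp only [Finset.mem_Icc] at hx; simp only [Finset.mem_range]; omega
  have h2 : ∑ k ∈ Finset.Icc 1 q, ((k : ℝ) ^ m * |a k|) ^ 2 ≤ 2 * M ^ 2 := by
    calc ∑ k ∈ Finset.Icc 1 q, ((k : ℝ) ^ m * |a k|) ^ 2
        = ∑ k ∈ Finset.Icc 1 q, (a k * (k : ℝ) ^ m) ^ 2 :=
          Finset.sum_congr rfl fun k _ => by rw [mul_pow, mul_pow, sq_abs]; ring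
      _ = ∑ k ∈ Finset.range (q + 1), (a k * (k : ℝ) ^ m) ^ 2 := by
          refine Finset.sum_subset hsub fun x hx hnx => ?_
          have hx0 : x = 0 := by
            simp only [Finset.mem_range] at hx
            simp only [Finset.mem_Icc] at hnx
            omega
          simp [hx0, zero_pow (show m ≠ 0 by omega)]
      _ ≤ 2 * M ^ 2 := hsq
  have hcs := Finset.sum_mul_sq_le_sq_mul_sq (Finset.Icc 1 q)
    (fun k => 1 / (k : ℝ)) (fun k => (k : ℝ) ^ m * |a k|)
  have hinv := sum_inv_sq_le_two q
  have hL : ∑ k ∈ Finset.Icc 1 q, (k : ℝ) ^ (m - 1) * |a k|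
      = ∑ k ∈ Finset.Icc 1 q, (1 / (k : ℝ)) * ((k : ℝ) ^ m * |a k|) := by
    refine Finset.sum_congr rfl fun k hk => ?_
    have hk1 : 1 ≤ k := (Finset.mem_Icc.mp hk).1
    have hk0 : (k : ℝ) ≠ 0 := Nat.cast_ne_zero.mpr (by omega)
    have hpow : (k : ℝ) ^ m = (k : ℝ) ^ (m - 1) * k := by
      conv_lhs => rw [show m = (m - 1) + 1 by omega]
      rw [pow_succ]
    rw [hpow]
    field_simp
  rw [hL]
  have hnn : (0:ℝ) ≤ ∑ k ∈ Finset.Icc 1 q, ((k : ℝ) ^ m * |a k|) ^ 2 :=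
    Finset.sum_nonneg fun k _ => sq_nonneg _
  have hfinal : (∑ k ∈ Finset.Icc 1 q, (1 / (k : ℝ)) * ((k : ℝ) ^ m * |a k|)) ^ 2
      ≤ 2 * (2 * M ^ 2) :=
    le_trans hcs (mul_le_mul hinv h2 hnn (by norm_num))
  have hLnn : 0 ≤ ∑ k ∈ Finset.Icc 1 q, (1 / (k : ℝ)) * ((k : ℝ) ^ m * |a k|) :=
    Finset.sum_nonneg fun k _ => by positivity
  nlinarith [hfinal, hLnn, hM0]
end

section
/- Let n, k ∈ ℕ with k ≥ 1 and let i, j : {1,…,k} → {1,…,n} be two index sequences. Then the average over a uniformly random permutation σ ∈ S_n of the product ∏_{ℓ=1}^{k} 1[σ(i_ℓ) = j_ℓ] equals 1/(n)_m if the sequences i and j induce the same set partition of {1,…,k} (i.e. for all a, b: i_a = i_b if and only if j_a = j_b), where m is the number of distinct values taken by i, and equals 0 otherwise. -/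
open scoped Classical

/-!
STATEMENT 15 (integration formula for the symmetric group).
For index sequences `i j : {1,…,k} → {1,…,n}` the average over a uniformly random `σ ∈ S_n`
of `∏_ℓ 1[σ(i_ℓ) = j_ℓ]` equals `1/(n)_m` if `i` and `j` induce the same set partition of
`{1,…,k}` (where `m` is the number of distinct values of `i`), and `0` otherwise.
-/

theorem symmetric_group_integration_formula (n k : ℕ) (hk : 1 ≤ k) (i j : Fin k → Fin n) :
    (∑ σ : Equiv.Perm (Fin n), ∏ ℓ : Fin k, (if σ (i ℓ) = j ℓ then (1 : ℝ) else 0)) /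
        (Fintype.card (Equiv.Perm (Fin n)) : ℝ) =
      if ∀ a b : Fin k, i a = i b ↔ j a = j b then
        1 / (Nat.descFactorial n ((Finset.univ.image i).card) : ℝ)
      else 0 := by
  classical
  simp only [Finset.prod_boole]
  simp only [Finset.mem_univ, forall_true_left, Finset.sum_boole]
  set S := Finset.univ.image i with hSdef
  set T := Finset.univ.image j with hTdef
  by_cases h : ∀ a b : Fin k, i a = i b ↔ j a = j b
  · rw [if_pos h]
    have hmemS : ∀ a, i a ∈ S := fun a => Finset.mem_image_of_mem i (Finset.mem_univ a)
    have hmemT : ∀ a, j a ∈ T := fun a => Finset.mem_image_of_mem j (Finset.mem_univ a)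
    have hex : ∀ x : {x // x ∈ S}, ∃ ℓ, i ℓ = (x : Fin n) := by
      rintro ⟨x, hx⟩
      rcases Finset.mem_image.mp hx with ⟨ℓ, _, hℓ⟩
      exact ⟨ℓ, hℓ⟩
    choose g hg using hex
    set f1 : {x // x ∈ S} → {x // x ∈ T} := fun x => ⟨j (g x), hmemT _⟩ with hf1
    have key : ∀ a : Fin k, (f1 ⟨i a, hmemS a⟩ : Fin n) = j a := fun a =>
      (h (g ⟨i a, hmemS a⟩) a).mp (hg ⟨i a, hmemS a⟩)
    have hinj : Function.Injective f1 := by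
      intro x y hxy
      have h1 : j (g x) = j (g y) := congrArg Subtype.val hxy
      have h2 : i (g x) = i (g y) := (h _ _).mpr h1
      ext
      rw [← hg x, ← hg y, h2]
    have hsurj : Function.Surjective f1 := by
      rintro ⟨y, hy⟩
      rcases Finset.mem_image.mp hy with ⟨a, _, ha⟩
      exact ⟨⟨i a, hmemS a⟩, Subtype.ext (by rw [key a, ha])⟩
    set e : {x // x ∈ S} ≃ {x // x ∈ T} := Equiv.ofBijective f1 ⟨hinj, hsurj⟩ with he
    have hecoe : ∀ x, (e x : Fin n) = j (g x) := fun x => rfl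
    have hcompl : ∀ (σ : Equiv.Perm (Fin n)), (∀ ℓ, σ (i ℓ) = j ℓ) →
        ∀ x : Fin n, x ∈ S ↔ σ x ∈ T := by
      intro σ hσ x
      constructor
      · intro hx
        rcases Finset.mem_image.mp hx with ⟨a, _, ha⟩
        rw [← ha, hσ a]; exact hmemT a
      · intro hx
        rcases Finset.mem_image.mp hx with ⟨a, _, ha⟩
        have hxa : σ x = σ (i a) := by rw [hσ a, ha]
        rw [σ.injective hxa]; exact hmemS a
    -- the bijection between extensions and equivalences of complements
    have Φ : {σ : Equiv.Perm (Fin n) // ∀ ℓ, σ (i ℓ) = j ℓ} ≃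
        ({x : Fin n // x ∉ S} ≃ {x : Fin n // x ∉ T}) := by
      refine
        { toFun := fun σ => Equiv.subtypeEquiv σ.1
            (fun x => not_iff_not.mpr (hcompl σ.1 σ.2 x))
          invFun := fun f => ⟨(Equiv.sumCompl (fun x => x ∈ S)).symm.trans
              ((e.sumCongr f).trans (Equiv.sumCompl (fun x => x ∈ T))), ?_⟩
          left_inv := ?_
          right_inv := ?_ }
      · intro ℓ
        simp only [Equiv.trans_apply,
          Equiv.sumCompl_symm_apply_of_pos (hmemS ℓ), Equiv.sumCongr_apply,
          Sum.map_inl, Equiv.sumCompl_apply_inl]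
        exact key ℓ
      · rintro ⟨σ, hσ⟩
        apply Subtype.ext
        apply Equiv.ext
        intro x
        by_cases hx : x ∈ S
        · simp only [Equiv.trans_apply,
            Equiv.sumCompl_symm_apply_of_pos hx, Equiv.sumCongr_apply,
            Sum.map_inl, Equiv.sumCompl_apply_inl]
          rcases Finset.mem_image.mp hx with ⟨a, _, ha⟩
          have : (⟨x, hx⟩ : {x // x ∈ S}) = ⟨i a, hmemS a⟩ := Subtype.ext ha.symm
          rw [this]
          show (f1 ⟨i a, hmemS a⟩ : Fin n) = σ x
          rw [key a, ← ha, hσ a]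
        · simp only [Equiv.trans_apply,
            Equiv.sumCompl_symm_apply_of_neg hx, Equiv.sumCongr_apply,
            Sum.map_inr, Equiv.sumCompl_apply_inr, Equiv.subtypeEquiv_apply]
      · intro f
        apply Equiv.ext
        rintro ⟨x, hx⟩
        apply Subtype.ext
        simp only [Equiv.subtypeEquiv_apply, Equiv.trans_apply,
          Equiv.sumCompl_symm_apply_of_neg hx, Equiv.sumCongr_apply,
          Sum.map_inr, Equiv.sumCompl_apply_inr]
    have hTcard : T.card = S.card := by
      rw [← Fintype.card_coe, ← Fintype.card_coe]
      exact (Fintype.card_congr e).symm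
    have hmn : S.card ≤ n := by
      have := Finset.card_le_univ S
      rwa [Fintype.card_fin] at this
    have hcc : Fintype.card {x : Fin n // x ∉ S} = Fintype.card {x : Fin n // x ∉ T} := by
      have h1 : Fintype.card {x : Fin n // x ∉ S}
          = Fintype.card (Fin n) - Fintype.card {x : Fin n // x ∈ S} :=
        Fintype.card_subtype_compl _
      have h2 : Fintype.card {x : Fin n // x ∉ T}
          = Fintype.card (Fin n) - Fintype.card {x : Fin n // x ∈ T} :=
        Fintype.card_subtype_compl _
      rw [h1, h2, Fintype.card_congr e]
    have hcS : Fintype.card {x : Fin n // x ∉ S} = n - S.card := by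
      rw [Fintype.card_subtype_compl, Fintype.card_fin, Fintype.card_coe]
    have hcount : (Finset.univ.filter
        (fun σ : Equiv.Perm (Fin n) => ∀ ℓ, σ (i ℓ) = j ℓ)).card
        = Nat.factorial (n - S.card) := by
      have h0 : (Finset.univ.filter
          (fun σ : Equiv.Perm (Fin n) => ∀ ℓ, σ (i ℓ) = j ℓ)).card
          = Fintype.card {σ : Equiv.Perm (Fin n) // ∀ ℓ, σ (i ℓ) = j ℓ} :=
        (Fintype.card_subtype _).symm
      rw [h0, Fintype.card_congr Φ,
        Fintype.card_equiv (Fintype.equivOfCardEq hcc), hcS]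
    rw [hcount, Fintype.card_perm, Fintype.card_fin]
    have hfact : (Nat.factorial (n - S.card) : ℝ) * (Nat.descFactorial n S.card : ℝ) = ((Nat.factorial n) : ℝ) := by
      exact_mod_cast congrArg (Nat.cast : ℕ → ℝ) (Nat.factorial_mul_descFactorial hmn)
    have hd0 : (Nat.descFactorial n S.card : ℝ) ≠ 0 := by
      have : Nat.descFactorial n S.card ≠ 0 := fun h0 =>
        absurd (Nat.descFactorial_eq_zero_iff_lt.mp h0) (not_lt.mpr hmn)
      exact_mod_cast this
    have hf0 : ((Nat.factorial n) : ℝ) ≠ 0 := by exact_mod_cast n.factorial_ne_zero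
    field_simp
    linarith [hfact]
  · rw [if_neg h]
    push_neg at h
    obtain ⟨a, b, hab⟩ := h
    have hempty : (Finset.univ.filter
        (fun σ : Equiv.Perm (Fin n) => ∀ ℓ, σ (i ℓ) = j ℓ)) = ∅ := by
      rw [Finset.eq_empty_iff_forall_notMem]
      intro σ hσ
      rw [Finset.mem_filter] at hσ
      have hσ' : ∀ ℓ, σ (i ℓ) = j ℓ := hσ.2
      rcases hab with ⟨hi, hj⟩ | ⟨hi, hj⟩
      · exact hj (by rw [← hσ' a, ← hσ' b, hi])
      · have : σ (i a) = σ (i b) := by rw [hσ' a, hσ' b, hj]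
        exact hi (σ.injective this)
    rw [hempty]
    simp
end
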